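/- Let X be a real D₁ × D₂ matrix and let U be a real D₁ × d₁ matrix with orthonormal columns (UᵀU = I_{d₁}). Set B := sgn(XᵀU) (entrywise sign), and let U′ be any real D₁ × d₁ matrix with orthonormal columns maximizing V ↦ Tr(VᵀXB) over all D₁ × d₁ matrices V with orthonormal columns. Then ‖UᵀX‖₁ = Tr(UᵀXB) ≤ Tr(U′ᵀXB) ≤ ‖U′ᵀX‖₁; in particular, the alternating-optimization update does not decrease the L1-PCA objective. -/
import Mathlib


open Matrix BigOperators

/-- Entrywise L1 norm of a real matrix. -/
noncomputable def l1Norm {m n : ℕ} (M : Matrix (Fin m) (Fin n) ℝ) : ℝ :=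
  ∑ i, ∑ j, |M i j|

/-- Entrywise sign of a real matrix, with sgn(0) = 1. -/
noncomputable def msgn {m n : ℕ} (M : Matrix (Fin m) (Fin n) ℝ) : Matrix (Fin m) (Fin n) ℝ :=
  fun i j => if 0 ≤ M i j then 1 else -1

lemma trace_expand {D₁ D₂ d₁ : ℕ} (X : Matrix (Fin D₁) (Fin D₂) ℝ)
    (U W : Matrix (Fin D₁) (Fin d₁) ℝ) :
    (Wᵀ * X * msgn (Xᵀ * U)).trace
      = ∑ j, ∑ k, (Wᵀ * X) j k * (if 0 ≤ (Uᵀ * X) j k then 1 else -1) := by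
  simp only [Matrix.trace, Matrix.diag, Matrix.mul_apply, msgn, Matrix.transpose_apply]
  congr 1; ext j; congr 1; ext k
  congr 2
  simp [Matrix.mul_apply, mul_comm]

theorem l1pca_ao_update_nondecreasing
    {D₁ D₂ d₁ : ℕ} (X : Matrix (Fin D₁) (Fin D₂) ℝ)
    (U U' : Matrix (Fin D₁) (Fin d₁) ℝ)
    (hU : Uᵀ * U = 1) (hU' : U'ᵀ * U' = 1)
    (hU'max : ∀ V : Matrix (Fin D₁) (Fin d₁) ℝ, Vᵀ * V = 1 →
      (Vᵀ * X * msgn (Xᵀ * U)).trace ≤ (U'ᵀ * X * msgn (Xᵀ * U)).trace) :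
    l1Norm (Uᵀ * X) = (Uᵀ * X * msgn (Xᵀ * U)).trace ∧
    (Uᵀ * X * msgn (Xᵀ * U)).trace ≤ (U'ᵀ * X * msgn (Xᵀ * U)).trace ∧
    (U'ᵀ * X * msgn (Xᵀ * U)).trace ≤ l1Norm (U'ᵀ * X) := by
  refine ⟨?_, hU'max U hU, ?_⟩
  · rw [trace_expand, l1Norm]
    congr 1; ext j; congr 1; ext k
    by_cases h : 0 ≤ (Uᵀ * X) j k
    · simp [h, abs_of_nonneg h]
    · simp only [h, if_false]
      rw [abs_of_neg (lt_of_not_ge h)]; ring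
  · rw [trace_expand, l1Norm]
    apply Finset.sum_le_sum; intro j _
    apply Finset.sum_le_sum; intro k _
    by_cases h : 0 ≤ (Uᵀ * X) j k <;> simp [h]
    · exact le_abs_self _
    · exact neg_le_abs _
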